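/- Let β₁, β₂, b > 0. Then for all p₁, p₂ > 0, (β₁√p₁ + β₂√p₂)^{-b} = ∫_{ℝ²₊} e^{-p₁x₁ - p₂x₂} H(x₁,x₂) dx₁dx₂, where H(x₁,x₂) = (2^{b-1}/π) β₁β₂ (Γ(b/2+1)/Γ(b)) (x₁x₂)^{-3/2} (β₁²/x₁ + β₂²/x₂)^{-b/2-1}. -/

import Mathlib

open MeasureTheory Real Set

lemma glasser_deriv {a d t : ℝ} (ht : t ≠ 0) :
    HasDerivAt (fun t => a * t - d / t) (a + d / t ^ 2) t := by
  have h1 : HasDerivAt (fun t : ℝ => a * t) a t := by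
    simpa using (hasDerivAt_id t).const_mul a
  have h2 : HasDerivAt (fun t : ℝ => d / t) (-(d / t ^ 2)) t := by
    simpa [div_eq_mul_inv, neg_mul, mul_comm, mul_neg] using (hasDerivAt_inv ht).const_mul d
  simpa [sub_neg_eq_add] using h1.fun_sub h2

lemma glasser_inj {a d : ℝ} (ha : 0 < a) (hd : 0 < d) :
    InjOn (fun t => a * t - d / t) (Ioi (0:ℝ)) := by
  apply StrictMonoOn.injOn
  intro x hx y hy hxy
  have h1 : a * x < a * y := by exact (mul_lt_mul_iff_right₀ ha).2 hxy
  have h2 : d / y < d / x := div_lt_div_of_pos_left hd hx hxy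
  simp only
  linarith

lemma glasser_image {a d : ℝ} (ha : 0 < a) (hd : 0 < d) :
    (fun t => a * t - d / t) '' (Ioi (0:ℝ)) = univ := by
  apply eq_univ_of_forall
  intro y
  set s := Real.sqrt (y ^ 2 + 4 * a * d) with hs
  have hs2 : s ^ 2 = y ^ 2 + 4 * a * d := Real.sq_sqrt (by positivity)
  have hsy : -y < s := by
    have h1 : |y| < s := by
      have : Real.sqrt (y ^ 2) < s := by
        apply Real.sqrt_lt_sqrt (by positivity); nlinarith
      simpa [Real.sqrt_sq_eq_abs] using this
    calc -y ≤ |y| := neg_le_abs y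
    _ < s := h1
  have hys : 0 < y + s := by linarith
  refine ⟨(y + s) / (2 * a), ?_, ?_⟩
  · simp only [mem_Ioi]; positivity
  · simp only
    have h1 : y + s ≠ 0 := by positivity
    have h2 : (2:ℝ) * a ≠ 0 := by positivity
    field_simp
    nlinarith

lemma glasser_eq {a d : ℝ} (ha : 0 < a) (hd : 0 < d) :
    (IntegrableOn (fun t => (a + d / t ^ 2) * Real.exp (-(a * t - d / t) ^ 2)) (Ioi 0)) ∧
    ∫ t in Ioi (0:ℝ), (a + d / t ^ 2) * Real.exp (-(a * t - d / t) ^ 2) = Real.sqrt π := by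
  have hderiv : ∀ t ∈ Ioi (0:ℝ), HasDerivWithinAt (fun t => a * t - d / t)
      (a + d / t ^ 2) (Ioi 0) t :=
    fun t ht => (glasser_deriv (ne_of_gt ht)).hasDerivWithinAt
  have hinj := glasser_inj ha hd
  have himg := glasser_image ha hd
  have hgauss : Integrable (fun u : ℝ => Real.exp (-u ^ 2)) := by
    simpa using integrable_exp_neg_mul_sq (one_pos)
  have hcongr : ∀ t ∈ Ioi (0:ℝ),
      |a + d / t ^ 2| • Real.exp (-(a * t - d / t) ^ 2)
        = (a + d / t ^ 2) * Real.exp (-(a * t - d / t) ^ 2) := by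
    intro t ht
    rw [smul_eq_mul, abs_of_pos (by positivity)]
  constructor
  · have := (integrableOn_image_iff_integrableOn_abs_deriv_smul measurableSet_Ioi hderiv hinj
      (fun u => Real.exp (-u ^ 2))).1
    rw [himg] at this
    exact (this hgauss.integrableOn).congr_fun hcongr measurableSet_Ioi
  · have := integral_image_eq_integral_abs_deriv_smul measurableSet_Ioi hderiv hinj
      (fun u => Real.exp (-u ^ 2))
    rw [himg, Measure.restrict_univ] at this
    rw [← setIntegral_congr_fun measurableSet_Ioi hcongr, ← this]
    simpa using integral_gaussian 1

lemma reflect_eq {a d : ℝ} (ha : 0 < a) (hd : 0 < d) :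
    ∫ t in Ioi (0:ℝ), Real.exp (-(a * t - d / t) ^ 2)
      = ∫ t in Ioi (0:ℝ), (d / (a * t ^ 2)) * Real.exp (-(a * t - d / t) ^ 2) := by
  have hderiv : ∀ t ∈ Ioi (0:ℝ), HasDerivWithinAt (fun t => d / (a * t))
      (-(d / (a * t ^ 2))) (Ioi 0) t := by
    intro t ht
    have heq : (fun t : ℝ => d / (a * t)) = fun t : ℝ => d / a * t⁻¹ := by
      funext t; rw [div_mul_eq_div_div, div_eq_mul_inv]
    have h : HasDerivAt (fun t : ℝ => d / (a * t)) (-(d / (a * t ^ 2))) t := by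
      rw [heq, show -(d / (a * t ^ 2)) = d / a * -(t ^ 2)⁻¹ by
        rw [mul_neg, ← div_eq_mul_inv, div_div]]
      exact (hasDerivAt_inv (ne_of_gt (mem_Ioi.1 ht))).const_mul (d / a)
    exact h.hasDerivWithinAt
  have hinj : InjOn (fun t => d / (a * t)) (Ioi (0:ℝ)) := by
    intro x hx y hy h
    simp only at h
    have hx0 := mem_Ioi.1 hx; have hy0 := mem_Ioi.1 hy
    rw [div_eq_div_iff (by positivity) (by positivity)] at h
    have h2 : a * y = a * x := mul_left_cancel₀ (ne_of_gt hd) h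
    exact (mul_left_cancel₀ (ne_of_gt ha) h2).symm
  have himg : (fun t => d / (a * t)) '' (Ioi (0:ℝ)) = Ioi (0:ℝ) := by
    ext y; constructor
    · rintro ⟨t, ht, rfl⟩
      have := mem_Ioi.1 ht
      exact mem_Ioi.2 (by positivity)
    · intro hy
      have hy0 := mem_Ioi.1 hy
      refine ⟨d / (a * y), mem_Ioi.2 (by positivity), ?_⟩
      field_simp
  have := integral_image_eq_integral_abs_deriv_smul measurableSet_Ioi hderiv hinj
    (fun u => Real.exp (-(a * u - d / u) ^ 2))
  rw [himg] at this
  rw [this]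
  apply setIntegral_congr_fun measurableSet_Ioi
  intro t ht
  have ht0 := mem_Ioi.1 ht
  have h1 : a * (d / (a * t)) - d / (d / (a * t)) = -(a * t - d / t) := by
    field_simp; ring
  dsimp only
  rw [smul_eq_mul, h1, neg_sq, abs_neg, abs_of_pos (by positivity)]

lemma inv_sq_gaussian {a d : ℝ} (ha : 0 < a) (hd : 0 < d) :
    (IntegrableOn (fun t => 1 / t ^ 2 * Real.exp (-(a * t - d / t) ^ 2)) (Ioi 0)) ∧
    ∫ t in Ioi (0:ℝ), 1 / t ^ 2 * Real.exp (-(a * t - d / t) ^ 2)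
      = Real.sqrt π / (2 * d) := by
  obtain ⟨hInt1, hEq1⟩ := glasser_eq ha hd
  have hm0 : Measurable fun t : ℝ => Real.exp (-(a * t - d / t) ^ 2) :=
    Real.measurable_exp.comp
      ((((measurable_id.const_mul a).sub (measurable_const.div measurable_id)).pow_const 2).neg)
  have hmeas : Measurable fun t : ℝ => a * Real.exp (-(a * t - d / t) ^ 2) :=
    hm0.const_mul a
  have haE : IntegrableOn (fun t => a * Real.exp (-(a * t - d / t) ^ 2)) (Ioi 0) := by
    apply Integrable.mono' hInt1 hmeas.aestronglyMeasurable
    filter_upwards [ae_restrict_mem measurableSet_Ioi] with t ht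
    have ht0 := mem_Ioi.1 ht
    rw [Real.norm_eq_abs, abs_of_nonneg (by positivity)]
    have h1 : a ≤ a + d / t ^ 2 := le_add_of_nonneg_right (by positivity)
    exact mul_le_mul_of_nonneg_right h1 (Real.exp_nonneg _)
  have hE : IntegrableOn (fun t => Real.exp (-(a * t - d / t) ^ 2)) (Ioi 0) := by
    apply IntegrableOn.congr_fun (haE.const_mul a⁻¹) ?_ measurableSet_Ioi
    intro t _
    simp only
    rw [← mul_assoc, inv_mul_cancel₀ (ne_of_gt ha), one_mul]
  have hL : IntegrableOn (fun t => d / (a * t ^ 2) * Real.exp (-(a * t - d / t) ^ 2)) (Ioi 0) := by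
    apply IntegrableOn.congr_fun ((hInt1.sub haE).const_mul (1 / a)) ?_ measurableSet_Ioi
    intro t ht
    have ht0 := mem_Ioi.1 ht
    simp only [Pi.sub_apply]
    field_simp
    ring
  have hdL : IntegrableOn (fun t => d / t ^ 2 * Real.exp (-(a * t - d / t) ^ 2)) (Ioi 0) := by
    apply IntegrableOn.congr_fun (hL.const_mul a) ?_ measurableSet_Ioi
    intro t ht
    have ht0 := mem_Ioi.1 ht
    simp only
    field_simp
    try ring
  -- split the Glasser integral
  have hsplit : ∫ t in Ioi (0:ℝ), (a * Real.exp (-(a * t - d / t) ^ 2)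
      + d / t ^ 2 * Real.exp (-(a * t - d / t) ^ 2)) = Real.sqrt π := by
    rw [← hEq1]
    congr 1 with t
    ring
  rw [integral_add haE hdL] at hsplit
  -- relate the two pieces
  have hrefl := reflect_eq ha hd
  have hdL_eq : ∫ t in Ioi (0:ℝ), d / t ^ 2 * Real.exp (-(a * t - d / t) ^ 2)
      = a * ∫ t in Ioi (0:ℝ), Real.exp (-(a * t - d / t) ^ 2) := by
    rw [hrefl, ← integral_const_mul]
    apply setIntegral_congr_fun measurableSet_Ioi
    intro t ht
    have ht0 := mem_Ioi.1 ht
    simp only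
    rw [← mul_assoc, mul_div_assoc', mul_div_mul_left _ _ (ne_of_gt ha)]
  rw [integral_const_mul, hdL_eq] at hsplit
  have hK : ∫ t in Ioi (0:ℝ), Real.exp (-(a * t - d / t) ^ 2) = Real.sqrt π / (2 * a) := by
    have h2a : (2:ℝ) * a ≠ 0 := by positivity
    rw [eq_div_iff h2a]
    linarith
  constructor
  · apply IntegrableOn.congr_fun (hdL.const_mul (1 / d)) ?_ measurableSet_Ioi
    intro t ht
    have ht0 := mem_Ioi.1 ht
    simp only
    field_simp
    try ring
  · have : ∫ t in Ioi (0:ℝ), 1 / t ^ 2 * Real.exp (-(a * t - d / t) ^ 2)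
        = (1 / d) * ∫ t in Ioi (0:ℝ), d / t ^ 2 * Real.exp (-(a * t - d / t) ^ 2) := by
      rw [← integral_const_mul]
      apply setIntegral_congr_fun measurableSet_Ioi
      intro t ht
      have ht0 := mem_Ioi.1 ht
      simp only
      field_simp
      try ring
    rw [this, hdL_eq, hK]
    field_simp

lemma stable_laplace {c p : ℝ} (hc : 0 < c) (hp : 0 < p) :
    (IntegrableOn (fun x => Real.exp (-p * x) *
      (c / (2 * Real.sqrt π) * x ^ (-(3:ℝ)/2) * Real.exp (-c ^ 2 / (4 * x)))) (Ioi 0)) ∧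
    ∫ x in Ioi (0:ℝ), Real.exp (-p * x) *
      (c / (2 * Real.sqrt π) * x ^ (-(3:ℝ)/2) * Real.exp (-c ^ 2 / (4 * x)))
      = Real.exp (-(c * Real.sqrt p)) := by
  set G : ℝ → ℝ := fun x => Real.exp (-p * x) *
      (c / (2 * Real.sqrt π) * x ^ (-(3:ℝ)/2) * Real.exp (-c ^ 2 / (4 * x))) with hG
  have hsπ : (0:ℝ) < Real.sqrt π := Real.sqrt_pos.2 Real.pi_pos
  have hsp : (0:ℝ) < Real.sqrt p := Real.sqrt_pos.2 hp
  have hderiv : ∀ t ∈ Ioi (0:ℝ), HasDerivWithinAt (fun t : ℝ => t ^ 2) (2 * t) (Ioi 0) t := by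
    intro t _
    have := hasDerivAt_pow 2 t
    simpa using this.hasDerivWithinAt
  have hinj : InjOn (fun t : ℝ => t ^ 2) (Ioi 0) := by
    intro x hx y hy h
    simp only at h
    rw [← Real.sqrt_sq (le_of_lt (mem_Ioi.1 hx)), ← Real.sqrt_sq (le_of_lt (mem_Ioi.1 hy)), h]
  have himg : (fun t : ℝ => t ^ 2) '' (Ioi 0) = Ioi 0 := by
    ext y; constructor
    · rintro ⟨t, ht, rfl⟩
      exact mem_Ioi.2 (pow_pos (mem_Ioi.1 ht) 2)
    · intro hy
      exact ⟨Real.sqrt y, mem_Ioi.2 (Real.sqrt_pos.2 (mem_Ioi.1 hy)),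
        Real.sq_sqrt (le_of_lt (mem_Ioi.1 hy))⟩
  have key : ∀ t ∈ Ioi (0:ℝ), |2 * t| • G (t ^ 2)
      = (c / Real.sqrt π * Real.exp (-(c * Real.sqrt p))) *
        (1 / t ^ 2 * Real.exp (-(Real.sqrt p * t - c / 2 / t) ^ 2)) := by
    intro t ht
    have ht0 := mem_Ioi.1 ht
    have hrpow : ((t ^ 2 : ℝ)) ^ (-(3:ℝ)/2) = (t ^ 3)⁻¹ := by
      rw [← Real.rpow_natCast t 2, ← Real.rpow_mul (le_of_lt ht0)]
      norm_num
    have hexp : Real.exp (-p * t ^ 2) * Real.exp (-c ^ 2 / (4 * t ^ 2))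
        = Real.exp (-(c * Real.sqrt p)) * Real.exp (-(Real.sqrt p * t - c / 2 / t) ^ 2) := by
      rw [← Real.exp_add, ← Real.exp_add]
      congr 1
      have hs2 : Real.sqrt p ^ 2 = p := Real.sq_sqrt (le_of_lt hp)
      have e1 : (Real.sqrt p * t - c / 2 / t) ^ 2
          = p * t ^ 2 - c * Real.sqrt p + c ^ 2 / (4 * t ^ 2) := by
        rw [sub_sq, mul_pow, hs2]
        field_simp
        ring
      rw [e1]
      ring
    rw [smul_eq_mul, abs_of_pos (by positivity), hG]
    simp only
    rw [hrpow]
    rw [show Real.exp (-p * t ^ 2) * (c / (2 * Real.sqrt π) * (t ^ 3)⁻¹ *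
        Real.exp (-c ^ 2 / (4 * t ^ 2)))
      = (Real.exp (-p * t ^ 2) * Real.exp (-c ^ 2 / (4 * t ^ 2))) *
        (c / (2 * Real.sqrt π) * (t ^ 3)⁻¹) by ring, hexp]
    field_simp
  obtain ⟨hIsq, hEsq⟩ := inv_sq_gaussian hsp (by positivity : (0:ℝ) < c / 2)
  constructor
  · have h2 := (integrableOn_image_iff_integrableOn_abs_deriv_smul
      measurableSet_Ioi hderiv hinj G)
    rw [himg] at h2
    apply h2.2
    apply IntegrableOn.congr_fun
      (hIsq.const_mul (c / Real.sqrt π * Real.exp (-(c * Real.sqrt p)))) ?_ measurableSet_Ioi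
    intro t ht
    exact (key t ht).symm
  · have h2 := integral_image_eq_integral_abs_deriv_smul measurableSet_Ioi hderiv hinj G
    rw [himg] at h2
    rw [h2, setIntegral_congr_fun measurableSet_Ioi key, integral_const_mul, hEsq]
    rw [show (2 * (c/2) : ℝ) = c by ring]
    field_simp

lemma gamma_integrable {b q : ℝ} (hb : 0 < b) (hq : 0 < q) :
    IntegrableOn (fun s => s ^ (b - 1) * Real.exp (-(q * s))) (Ioi (0:ℝ)) := by
  have := integrableOn_rpow_mul_exp_neg_mul_rpow
    (by linarith : (-1:ℝ) < b - 1) one_pos hq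
  apply IntegrableOn.congr_fun this ?_ measurableSet_Ioi
  intro s _
  simp [Real.rpow_one, neg_mul]

lemma sq_gamma_eval {b B : ℝ} (hb : 0 < b) (hB : 0 < B) :
    (IntegrableOn (fun s => s ^ (b + 1) * Real.exp (-B * s ^ 2)) (Ioi (0:ℝ))) ∧
    ∫ s in Ioi (0:ℝ), s ^ (b + 1) * Real.exp (-B * s ^ 2)
      = B ^ (-(b + 1 + 1) / 2) * (1 / 2) * Real.Gamma ((b + 1 + 1) / 2) := by
  constructor
  · exact integrableOn_rpow_mul_exp_neg_mul_sq hB (by linarith)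
  · rw [← integral_rpow_mul_exp_neg_mul_rpow zero_lt_two (by linarith : (-1:ℝ) < b + 1) hB]
    apply setIntegral_congr_fun measurableSet_Ioi
    intro s hs
    simp only
    congr 2
    rw [show (2:ℝ) = ((2:ℕ):ℝ) by norm_num, Real.rpow_natCast]

lemma factA {β₁ β₂ b p₁ p₂ x₁ x₂ : ℝ} (hβ₁ : 0 < β₁) (hβ₂ : 0 < β₂) (hb : 0 < b)
    (hx₁ : 0 < x₁) (hx₂ : 0 < x₂) :
    (IntegrableOn (fun s => s ^ (b - 1) / Real.Gamma b *
        (Real.exp (-p₁ * x₁) * (β₁ * s / (2 * Real.sqrt π) * x₁ ^ (-(3:ℝ)/2) *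
          Real.exp (-(β₁ * s) ^ 2 / (4 * x₁)))) *
        (Real.exp (-p₂ * x₂) * (β₂ * s / (2 * Real.sqrt π) * x₂ ^ (-(3:ℝ)/2) *
          Real.exp (-(β₂ * s) ^ 2 / (4 * x₂))))) (Ioi 0)) ∧
    ∫ s in Ioi (0:ℝ), s ^ (b - 1) / Real.Gamma b *
        (Real.exp (-p₁ * x₁) * (β₁ * s / (2 * Real.sqrt π) * x₁ ^ (-(3:ℝ)/2) *
          Real.exp (-(β₁ * s) ^ 2 / (4 * x₁)))) *
        (Real.exp (-p₂ * x₂) * (β₂ * s / (2 * Real.sqrt π) * x₂ ^ (-(3:ℝ)/2) *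
          Real.exp (-(β₂ * s) ^ 2 / (4 * x₂))))
      = Real.exp (-p₁ * x₁ - p₂ * x₂) *
          (2 ^ (b - 1) / π * β₁ * β₂ * (Real.Gamma (b / 2 + 1) / Real.Gamma b) *
            (x₁ * x₂) ^ (-(3:ℝ)/2) * (β₁ ^ 2 / x₁ + β₂ ^ 2 / x₂) ^ (-b / 2 - 1)) := by
  set A : ℝ := β₁ ^ 2 / x₁ + β₂ ^ 2 / x₂ with hA_def
  have hA : 0 < A := by positivity
  set D : ℝ := Real.exp (-p₁ * x₁ - p₂ * x₂) * (β₁ * β₂ / (4 * π * Real.Gamma b)) *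
      x₁ ^ (-(3:ℝ)/2) * x₂ ^ (-(3:ℝ)/2) with hD_def
  have hππ : Real.sqrt π * Real.sqrt π = π := Real.mul_self_sqrt Real.pi_pos.le
  have hΓ : 0 < Real.Gamma b := Real.Gamma_pos_of_pos hb
  have hπ : (0:ℝ) < π := Real.pi_pos
  have hpt : ∀ s ∈ Ioi (0:ℝ), s ^ (b - 1) / Real.Gamma b *
        (Real.exp (-p₁ * x₁) * (β₁ * s / (2 * Real.sqrt π) * x₁ ^ (-(3:ℝ)/2) *
          Real.exp (-(β₁ * s) ^ 2 / (4 * x₁)))) *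
        (Real.exp (-p₂ * x₂) * (β₂ * s / (2 * Real.sqrt π) * x₂ ^ (-(3:ℝ)/2) *
          Real.exp (-(β₂ * s) ^ 2 / (4 * x₂))))
      = D * (s ^ (b + 1) * Real.exp (-(A / 4) * s ^ 2)) := by
    intro s hs
    have hs0 := mem_Ioi.1 hs
    have hss : s ^ (b - 1) * s ^ 2 = s ^ (b + 1) := by
      rw [← Real.rpow_natCast s 2, ← Real.rpow_add hs0]
      congr 1
      push_cast
      ring
    have hexp1 : Real.exp (-p₁ * x₁) * Real.exp (-p₂ * x₂)
        = Real.exp (-p₁ * x₁ - p₂ * x₂) := by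
      rw [← Real.exp_add]; ring_nf
    have hexp2 : Real.exp (-(β₁ * s) ^ 2 / (4 * x₁)) * Real.exp (-(β₂ * s) ^ 2 / (4 * x₂))
        = Real.exp (-(A / 4) * s ^ 2) := by
      rw [← Real.exp_add]
      congr 1
      rw [hA_def]
      field_simp
      ring
    rw [hD_def, ← hss, ← hexp1, ← hexp2,
      show (β₁ * β₂ / (4 * π * Real.Gamma b) : ℝ)
        = β₁ * β₂ / (2 * Real.sqrt π * (2 * Real.sqrt π) * Real.Gamma b) by
          have h4π : (2 * Real.sqrt π * (2 * Real.sqrt π) : ℝ) = 4 * π := by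
            linear_combination 4 * hππ
          rw [h4π]]
    field_simp
  obtain ⟨hInt, hEval⟩ := sq_gamma_eval hb (by positivity : (0:ℝ) < A / 4)
  constructor
  · apply IntegrableOn.congr_fun (hInt.const_mul D) ?_ measurableSet_Ioi
    intro s hs
    exact (hpt s hs).symm
  · rw [setIntegral_congr_fun measurableSet_Ioi hpt, integral_const_mul, hEval]
    have e1 : ((A / 4:ℝ)) ^ (-(b + 1 + 1) / 2) = A ^ (-b / 2 - 1) * (2:ℝ) ^ (b - 1) * 8 := by
      rw [Real.div_rpow hA.le (by norm_num : (0:ℝ) ≤ 4)]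
      rw [show (-(b + 1 + 1) / 2 : ℝ) = -b / 2 - 1 by ring]
      rw [show (4:ℝ) = (2:ℝ) ^ (2:ℕ) by norm_num, ← Real.rpow_natCast (2:ℝ) 2,
        ← Real.rpow_mul (by norm_num : (0:ℝ) ≤ 2)]
      rw [show ((2:ℕ):ℝ) * (-b / 2 - 1) = -(b + 2) by push_cast; ring]
      rw [Real.rpow_neg (by norm_num : (0:ℝ) ≤ 2), div_eq_mul_inv, inv_inv]
      rw [show (b + 2 : ℝ) = (b - 1) + 3 by ring, Real.rpow_add (by norm_num : (0:ℝ) < 2)]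
      rw [show ((2:ℝ) ^ (3:ℝ)) = 8 by
        rw [show (3:ℝ) = ((3:ℕ):ℝ) by norm_num, Real.rpow_natCast]; norm_num]
      ring
    have e2 : Real.Gamma ((b + 1 + 1) / 2) = Real.Gamma (b / 2 + 1) := by
      rw [show ((b + 1 + 1) / 2 : ℝ) = b / 2 + 1 by ring]
    have e3 : ((x₁ * x₂:ℝ)) ^ (-(3:ℝ)/2) = x₁ ^ (-(3:ℝ)/2) * x₂ ^ (-(3:ℝ)/2) :=
      Real.mul_rpow hx₁.le hx₂.le
    rw [e1, e2, e3, hD_def]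
    field_simp
    ring

/-- Two-dimensional Laplace transform representation of `(β₁√p₁ + β₂√p₂)^{-b}`. -/
theorem laplace_of_sqrt_power
    (β₁ β₂ b : ℝ) (hβ₁ : 0 < β₁) (hβ₂ : 0 < β₂) (hb : 0 < b)
    (p₁ p₂ : ℝ) (hp₁ : 0 < p₁) (hp₂ : 0 < p₂) :
    (β₁ * Real.sqrt p₁ + β₂ * Real.sqrt p₂) ^ (-b)
      = ∫ x₁ in Ioi (0:ℝ), ∫ x₂ in Ioi (0:ℝ),
          Real.exp (-p₁ * x₁ - p₂ * x₂) *
            (2 ^ (b - 1) / Real.pi * β₁ * β₂ * (Real.Gamma (b / 2 + 1) / Real.Gamma b) *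
              (x₁ * x₂) ^ (-(3:ℝ)/2) * (β₁ ^ 2 / x₁ + β₂ ^ 2 / x₂) ^ (-b / 2 - 1)) := by
  have hsp₁ : 0 < Real.sqrt p₁ := Real.sqrt_pos.2 hp₁
  have hsp₂ : 0 < Real.sqrt p₂ := Real.sqrt_pos.2 hp₂
  have hq : 0 < β₁ * Real.sqrt p₁ + β₂ * Real.sqrt p₂ := by positivity
  have hΓ : 0 < Real.Gamma b := Real.Gamma_pos_of_pos hb
  have hsπ : 0 < Real.sqrt π := Real.sqrt_pos.2 Real.pi_pos
  set W : ℝ → ℝ → ℝ := fun x₁ s => s ^ (b - 1) / Real.Gamma b *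
      (Real.exp (-p₁ * x₁) * (β₁ * s / (2 * Real.sqrt π) * x₁ ^ (-(3:ℝ)/2) *
        Real.exp (-(β₁ * s) ^ 2 / (4 * x₁)))) *
      Real.exp (-(β₂ * s * Real.sqrt p₂)) with hW_def
  set V : ℝ → ℝ := fun s => 1 / Real.Gamma b *
      (s ^ (b - 1) * Real.exp (-((β₁ * Real.sqrt p₁ + β₂ * Real.sqrt p₂) * s))) with hV_def
  -- integrability of W x₁ in s
  have hWint : ∀ x₁ ∈ Ioi (0:ℝ), IntegrableOn (W x₁) (Ioi 0) := by
    intro x₁ hx₁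
    have hx₁0 := mem_Ioi.1 hx₁
    have hα : 0 < β₁ ^ 2 / (4 * x₁) := by positivity
    have hbase := (integrableOn_rpow_mul_exp_neg_mul_sq hα
        (by linarith : (-1:ℝ) < b)).const_mul
        (1 / Real.Gamma b * (Real.exp (-p₁ * x₁) * (β₁ / (2 * Real.sqrt π) *
          x₁ ^ (-(3:ℝ)/2))))
    apply Integrable.mono' hbase ?_ ?_
    · have : Measurable (W x₁) := by simp only [hW_def]; fun_prop
      exact this.aestronglyMeasurable
    · filter_upwards [ae_restrict_mem measurableSet_Ioi] with s hs
      have hs0 := mem_Ioi.1 hs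
      have hsb : s ^ (b - 1) * s = s ^ b := by
        rw [← Real.rpow_add_one (ne_of_gt hs0)]
        norm_num
      have hWeq : W x₁ s = (1 / Real.Gamma b * (Real.exp (-p₁ * x₁) *
          (β₁ / (2 * Real.sqrt π) * x₁ ^ (-(3:ℝ)/2)))) *
          (s ^ b * Real.exp (-(β₁ ^ 2 / (4 * x₁)) * s ^ 2)) *
          Real.exp (-(β₂ * s * Real.sqrt p₂)) := by
        simp only [hW_def]
        rw [show Real.exp (-(β₁ * s) ^ 2 / (4 * x₁))
            = Real.exp (-(β₁ ^ 2 / (4 * x₁)) * s ^ 2) by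
          congr 1; field_simp]
        rw [← hsb]
        ring
      rw [Real.norm_eq_abs, abs_of_nonneg (by simp only [hW_def]; positivity), hWeq]
      apply mul_le_of_le_one_right (by positivity)
      rw [Real.exp_le_one_iff]
      have : 0 ≤ β₂ * s * Real.sqrt p₂ := by positivity
      linarith
  -- step 1 : the inner x₂-integral
  have hstep1 : ∀ x₁ ∈ Ioi (0:ℝ),
      (∫ x₂ in Ioi (0:ℝ), Real.exp (-p₁ * x₁ - p₂ * x₂) *
          (2 ^ (b - 1) / Real.pi * β₁ * β₂ * (Real.Gamma (b / 2 + 1) / Real.Gamma b) *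
            (x₁ * x₂) ^ (-(3:ℝ)/2) * (β₁ ^ 2 / x₁ + β₂ ^ 2 / x₂) ^ (-b / 2 - 1)))
        = ∫ s in Ioi (0:ℝ), W x₁ s := by
    intro x₁ hx₁
    have hx₁0 := mem_Ioi.1 hx₁
    set F : ℝ → ℝ → ℝ := fun x₂ s =>
        s ^ (b - 1) / Real.Gamma b *
        (Real.exp (-p₁ * x₁) * (β₁ * s / (2 * Real.sqrt π) * x₁ ^ (-(3:ℝ)/2) *
          Real.exp (-(β₁ * s) ^ 2 / (4 * x₁)))) *
        (Real.exp (-p₂ * x₂) * (β₂ * s / (2 * Real.sqrt π) * x₂ ^ (-(3:ℝ)/2) *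
          Real.exp (-(β₂ * s) ^ 2 / (4 * x₂)))) with hF_def
    have hF_nonneg : ∀ x₂ ∈ Ioi (0:ℝ), ∀ s ∈ Ioi (0:ℝ), 0 ≤ F x₂ s := by
      intro x₂ hx₂ s hs
      have hx₂0 := mem_Ioi.1 hx₂; have hs0 := mem_Ioi.1 hs
      simp only [hF_def]
      positivity
    have hFslice : ∀ s ∈ Ioi (0:ℝ), (∫ x₂ in Ioi (0:ℝ), F x₂ s) = W x₁ s := by
      intro s hs
      have hs0 := mem_Ioi.1 hs
      simp only [hF_def, hW_def]
      rw [integral_const_mul, (stable_laplace (mul_pos hβ₂ hs0) hp₂).2]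
    have hFub : Integrable (Function.uncurry F)
        ((volume.restrict (Ioi 0)).prod (volume.restrict (Ioi 0))) := by
      refine (integrable_prod_iff' ?_).2 ⟨?_, ?_⟩
      · apply Measurable.aestronglyMeasurable
        simp only [Function.uncurry, hF_def]
        fun_prop
      · filter_upwards [ae_restrict_mem measurableSet_Ioi] with s hs
        have hs0 := mem_Ioi.1 hs
        simp only [Function.uncurry, hF_def]
        exact (stable_laplace (mul_pos hβ₂ hs0) hp₂).1.const_mul _
      · apply Integrable.congr (hWint x₁ hx₁)
        filter_upwards [ae_restrict_mem measurableSet_Ioi] with s hs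
        have h1 : ∫ x₂ in Ioi (0:ℝ), ‖F x₂ s‖ = ∫ x₂ in Ioi (0:ℝ), F x₂ s :=
          setIntegral_congr_fun measurableSet_Ioi
            (fun x₂ hx₂ => norm_of_nonneg (hF_nonneg x₂ hx₂ s hs))
        simp only [Function.uncurry]
        rw [h1, hFslice s hs]
    rw [setIntegral_congr_fun measurableSet_Ioi
      (fun x₂ hx₂ => ((factA hβ₁ hβ₂ hb hx₁0 (mem_Ioi.1 hx₂)).2).symm)]
    calc (∫ x₂ in Ioi (0:ℝ), ∫ s in Ioi (0:ℝ), F x₂ s)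
        = ∫ s in Ioi (0:ℝ), ∫ x₂ in Ioi (0:ℝ), F x₂ s := integral_integral_swap hFub
      _ = ∫ s in Ioi (0:ℝ), W x₁ s := setIntegral_congr_fun measurableSet_Ioi hFslice
  -- step 2 : the outer x₁-integral
  have hVint : IntegrableOn V (Ioi 0) := by
    have := (gamma_integrable hb hq).const_mul (1 / Real.Gamma b)
    exact this
  have hWslice : ∀ s ∈ Ioi (0:ℝ), (∫ x₁ in Ioi (0:ℝ), W x₁ s) = V s := by
    intro s hs
    have hs0 := mem_Ioi.1 hs
    simp only [hW_def, hV_def]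
    rw [integral_mul_const, integral_const_mul, (stable_laplace (mul_pos hβ₁ hs0) hp₁).2]
    rw [mul_assoc, show Real.exp (-(β₁ * s * Real.sqrt p₁)) * Real.exp (-(β₂ * s * Real.sqrt p₂))
        = Real.exp (-((β₁ * Real.sqrt p₁ + β₂ * Real.sqrt p₂) * s)) by
      rw [← Real.exp_add]; congr 1; ring]
    ring
  have hW_nonneg : ∀ x₁ ∈ Ioi (0:ℝ), ∀ s ∈ Ioi (0:ℝ), 0 ≤ W x₁ s := by
    intro x₁ hx₁ s hs
    have hx₁0 := mem_Ioi.1 hx₁; have hs0 := mem_Ioi.1 hs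
    simp only [hW_def]
    positivity
  have hFub2 : Integrable (Function.uncurry W)
      ((volume.restrict (Ioi 0)).prod (volume.restrict (Ioi 0))) := by
    refine (integrable_prod_iff' ?_).2 ⟨?_, ?_⟩
    · apply Measurable.aestronglyMeasurable
      simp only [Function.uncurry, hW_def]
      fun_prop
    · filter_upwards [ae_restrict_mem measurableSet_Ioi] with s hs
      have hs0 := mem_Ioi.1 hs
      simp only [Function.uncurry, hW_def]
      exact ((stable_laplace (mul_pos hβ₁ hs0) hp₁).1.const_mul _).mul_const _
    · apply Integrable.congr hVint
      filter_upwards [ae_restrict_mem measurableSet_Ioi] with s hs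
      have h1 : ∫ x₁ in Ioi (0:ℝ), ‖W x₁ s‖ = ∫ x₁ in Ioi (0:ℝ), W x₁ s :=
        setIntegral_congr_fun measurableSet_Ioi
          (fun x₁ hx₁ => norm_of_nonneg (hW_nonneg x₁ hx₁ s hs))
      simp only [Function.uncurry]
      rw [h1, hWslice s hs]
  have hVval : ∫ s in Ioi (0:ℝ), V s = (β₁ * Real.sqrt p₁ + β₂ * Real.sqrt p₂) ^ (-b) := by
    simp only [hV_def]
    rw [integral_const_mul, integral_rpow_mul_exp_neg_mul_Ioi hb hq]
    rw [one_div (β₁ * Real.sqrt p₁ + β₂ * Real.sqrt p₂), Real.inv_rpow hq.le,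
      ← Real.rpow_neg hq.le]
    field_simp
  rw [setIntegral_congr_fun measurableSet_Ioi hstep1,
    integral_integral_swap hFub2,
    setIntegral_congr_fun measurableSet_Ioi hWslice, hVval]
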